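/- Let a₁, a₂ be nonzero complex numbers with |a₁|² + |a₂|² < 1, and let T on H²(𝔻) be defined by T(1) = a₁ z + a₂ z², T(zⁿ) = z^{n+2} for n ≥ 1. Then T is analytic: ⋂_{n≥1} Tⁿ(H²(𝔻)) = {0}. -/

import Mathlib

open ContinuousLinearMap

local notation "⟪" x ", " y "⟫" => @inner ℂ _ _ x y

set_option maxHeartbeats 1000000 in
/-- If `|a₁|² + |a₂|² < 1` (with `a₁, a₂ ≠ 0`) and `T 1 = a₁ z + a₂ z²`,
`T zⁿ = z^{n+2}` for `n ≥ 1`, then `T` is analytic: `⋂_{n≥1} Tⁿ H = {0}`. -/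
theorem example_operator_analytic
    {H : Type*} [NormedAddCommGroup H] [InnerProductSpace ℂ H] [CompleteSpace H]
    (e : HilbertBasis ℕ ℂ H) (a₁ a₂ : ℂ) (ha₁ : a₁ ≠ 0) (ha₂ : a₂ ≠ 0)
    (hlt : ‖a₁‖ ^ 2 + ‖a₂‖ ^ 2 < 1)
    (T : H →L[ℂ] H)
    (hT0 : T (e 0) = a₁ • e 1 + a₂ • e 2)
    (hTn : ∀ n : ℕ, 1 ≤ n → T (e n) = e (n + 2)) :
    (⋂ n : ℕ, Set.range (⇑(T ^ (n + 1)))) = {0} := by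
  have orth : ∀ i j : ℕ, ⟪e i, e j⟫ = if i = j then 1 else 0 :=
    orthonormal_iff_ite.mp e.orthonormal
  -- Key lemma: vanishing of coefficients propagates through T.
  have L : ∀ (w : H) (k : ℕ), ((k = 1 ∨ k = 2) → ⟪e 0, w⟫ = 0) →
      (∀ j, 1 ≤ j → j + 2 = k → ⟪e j, w⟫ = 0) → ⟪e k, T w⟫ = 0 := by
    intro w k h0 h2
    have hs : HasSum (fun j : ℕ => e.repr w j • T (e j)) (T w) :=
      by simpa only [map_smul] using T.hasSum (e.hasSum_repr w)
    have hs2 : HasSum (fun j : ℕ => ⟪e k, e.repr w j • T (e j)⟫) ⟪e k, T w⟫ :=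
      (innerSL ℂ (e k)).hasSum hs
    have hz : ∀ j : ℕ, ⟪e k, e.repr w j • T (e j)⟫ = 0 := by
      intro j
      rw [inner_smul_right]
      rcases Nat.eq_zero_or_pos j with rfl | hj
      · rcases em (k = 1 ∨ k = 2) with h | h
        · rw [e.repr_apply_apply, h0 h, zero_mul]
        · push_neg at h
          rw [hT0]
          rw [inner_add_right, inner_smul_right, inner_smul_right,
            orth k 1, orth k 2, if_neg h.1, if_neg h.2]
          ring
      · rw [hTn j hj]
        rcases eq_or_ne (j + 2) k with h | h
        · rw [e.repr_apply_apply, h2 j hj h, zero_mul]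
        · rw [orth k (j + 2), if_neg (fun hh => h hh.symm), mul_zero]
    have heq : (fun j : ℕ => ⟪e k, e.repr w j • T (e j)⟫) = fun _ => (0 : ℂ) :=
      funext hz
    rw [heq] at hs2
    exact hs2.unique hasSum_zero
  -- Main induction: coefficients up to 2n of anything in range T^(n+1) vanish.
  have C : ∀ n : ℕ, ∀ (z : H) (k : ℕ), k ≤ 2 * n → ⟪e k, (T ^ (n + 1)) z⟫ = 0 := by
    intro n
    induction n with
    | zero =>
      intro z k hk
      obtain rfl : k = 0 := Nat.le_zero.mp (by omega)
      have h1 : (T ^ 1) z = T z := by rw [pow_one]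
      rw [h1]
      exact L z 0 (fun h => by omega) (fun j hj hjk => by omega)
    | succ n ih =>
      intro z k hk
      have h1 : (T ^ (n + 1 + 1)) z = T ((T ^ (n + 1)) z) := by
        rw [pow_succ' T (n + 1)]; rfl
      rw [h1]
      apply L
      · intro _; exact ih z 0 (by omega)
      · intro j hj hjk; exact ih z j (by omega)
  ext x
  simp only [Set.mem_iInter, Set.mem_singleton_iff]
  constructor
  · intro hx
    have hc : ∀ k : ℕ, ⟪e k, x⟫ = 0 := by
      intro k
      obtain ⟨z, hz⟩ := hx k
      rw [← hz]
      exact C k z k (by omega)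
    have hs := e.hasSum_repr x
    have heq : (fun i : ℕ => e.repr x i • e i) = fun _ => (0 : H) :=
      funext fun i => by rw [e.repr_apply_apply, hc i, zero_smul]
    rw [heq] at hs
    exact hs.unique hasSum_zero
  · rintro rfl n
    exact ⟨0, map_zero _⟩
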